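/- Let P be a row-stochastic matrix on Fin S that is irreducible (for all states i, j there exists n ≥ 1 with (P^n) i j > 0), let π be a stationary distribution of P, let f : Fin S → ℝ, and set J = ∑_i π i * f i. Then (a) there exists g : Fin S → ℝ satisfying the Poisson equation g i = f i - J + ∑_j P i j * g j for all i; and (b) any two solutions of this Poisson equation differ by a constant, i.e. if g and g' both satisfy it then there is c : ℝ with g' i = g i + c for all i. -/

import Mathlib

-- key aux lemma: harmonic functions of an irreducible stochastic matrix are constant
theorem my_harmonic_const
    (S : ℕ) (hS : 1 ≤ S)
    (P : Matrix (Fin S) (Fin S) ℝ)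
    (hP0 : ∀ i j, 0 ≤ P i j) (hP1 : ∀ i, ∑ j, P i j = 1)
    (hirr : ∀ i j : Fin S, ∃ n : ℕ, 1 ≤ n ∧ 0 < (P ^ n) i j)
    (h : Fin S → ℝ) (hh : ∀ i, h i = ∑ j, P i j * h j) :
    ∃ c : ℝ, ∀ i, h i = c := by
  have hpow0 : ∀ n i j, 0 ≤ (P ^ n) i j := by
    intro n
    induction n with
    | zero => intro i j; simp [Matrix.one_apply]; positivity
    | succ n ih =>
      intro i j
      rw [pow_succ, Matrix.mul_apply]
      exact Finset.sum_nonneg fun k _ => mul_nonneg (ih i k) (hP0 k j)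
  have hpow1 : ∀ n i, ∑ j, (P ^ n) i j = 1 := by
    intro n
    induction n with
    | zero => intro i; simp [Matrix.one_apply]
    | succ n ih =>
      intro i
      simp only [pow_succ, Matrix.mul_apply]
      rw [Finset.sum_comm]
      calc ∑ k, ∑ j, (P ^ n) i k * P k j = ∑ k, (P ^ n) i k * ∑ j, P k j := by
            simp [Finset.mul_sum]
        _ = 1 := by simp [hP1]; exact ih i
  have hhn : ∀ n i, h i = ∑ j, (P ^ n) i j * h j := by
    intro n
    induction n with
    | zero => intro i; simp [Matrix.one_apply]
    | succ n ih =>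
      intro i
      calc h i = ∑ j, (P ^ n) i j * h j := ih i
        _ = ∑ j, (P ^ n) i j * ∑ k, P j k * h k := by
            congr 1; ext j; rw [← hh j]
        _ = ∑ j, ∑ k, (P ^ n) i j * (P j k * h k) := by simp [Finset.mul_sum]
        _ = ∑ k, (∑ j, (P ^ n) i j * P j k) * h k := by
            rw [Finset.sum_comm]; congr 1; ext k; rw [Finset.sum_mul]; exact Finset.sum_congr rfl fun x _ => by ring
        _ = ∑ k, (P ^ (n+1)) i k * h k := by
            exact Finset.sum_congr rfl fun k _ => by rw [pow_succ, Matrix.mul_apply]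
  have hne : Nonempty (Fin S) := ⟨⟨0, hS⟩⟩
  obtain ⟨i0, _, hi0⟩ := Finset.exists_max_image Finset.univ h ⟨Classical.arbitrary _, Finset.mem_univ _⟩
  refine ⟨h i0, fun j => ?_⟩
  obtain ⟨n, -, hn⟩ := hirr i0 j
  have key : ∑ k, (P ^ n) i0 k * (h i0 - h k) = 0 := by
    simp only [mul_sub, Finset.sum_sub_distrib]
    rw [← Finset.sum_mul, hpow1, ← hhn]; ring
  have hterm : ∀ k ∈ Finset.univ, (P ^ n) i0 k * (h i0 - h k) = 0 := by
    rw [← Finset.sum_eq_zero_iff_of_nonneg]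
    · exact key
    · intro k _
      exact mul_nonneg (hpow0 n i0 k) (by linarith [hi0 k (Finset.mem_univ k)])
  have := hterm j (Finset.mem_univ j)
  rcases mul_eq_zero.1 this with h1 | h2
  · exact absurd h1 (ne_of_gt hn)
  · linarith

/-- Existence and uniqueness (up to an additive constant) of solutions of the
Poisson equation for an irreducible row-stochastic matrix. -/
theorem poisson_equation_exists_unique_up_to_const
    (S : ℕ) (hS : 1 ≤ S)
    (P : Matrix (Fin S) (Fin S) ℝ)
    (hP0 : ∀ i j, 0 ≤ P i j) (hP1 : ∀ i, ∑ j, P i j = 1)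
    (hirr : ∀ i j : Fin S, ∃ n : ℕ, 1 ≤ n ∧ 0 < (P ^ n) i j)
    (π : Fin S → ℝ)
    (hπ0 : ∀ i, 0 ≤ π i) (hπ1 : ∑ i, π i = 1)
    (hπstat : ∀ j, ∑ i, π i * P i j = π j)
    (f : Fin S → ℝ) (J : ℝ) (hJ : J = ∑ i, π i * f i) :
    (∃ g : Fin S → ℝ, ∀ i, g i = f i - J + ∑ j, P i j * g j) ∧
    (∀ g g' : Fin S → ℝ,
      (∀ i, g i = f i - J + ∑ j, P i j * g j) →
      (∀ i, g' i = f i - J + ∑ j, P i j * g' j) →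
      ∃ c : ℝ, ∀ i, g' i = g i + c) := by
  constructor
  · -- existence
    set T : (Fin S → ℝ) →ₗ[ℝ] (Fin S → ℝ) := (1 - P).mulVecLin with hT
    have hTapp : ∀ (g : Fin S → ℝ) (i : Fin S), T g i = g i - ∑ j, P i j * g j := by
      intro g i
      simp [hT, Matrix.mulVecLin, Matrix.mulVec, dotProduct, Matrix.sub_apply,
        Matrix.one_apply, sub_mul, Finset.sum_sub_distrib, Finset.sum_ite_eq]
    -- the linear functional  v ↦ ∑ π i * v i
    let φ : (Fin S → ℝ) →ₗ[ℝ] ℝ :=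
      { toFun := fun v => ∑ i, π i * v i
        map_add' := by intro u v; simp [mul_add, Finset.sum_add_distrib]
        map_smul' := by intro c v; simp [Finset.mul_sum]; congr 1; ext i; ring }
    have hone : (fun _ : Fin S => (1:ℝ)) ≠ 0 := by
      intro hcon
      have := congrFun hcon ⟨0, hS⟩
      simp at this
    -- kernel of T = constants
    have hker : LinearMap.ker T = Submodule.span ℝ {(fun _ : Fin S => (1:ℝ))} := by
      apply le_antisymm
      · intro v hv
        have hv' : ∀ i, v i = ∑ j, P i j * v j := by
          intro i
          have := congrFun (LinearMap.mem_ker.1 hv) i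
          rw [hTapp] at this
          simp at this
          linarith [this]
        obtain ⟨c, hc⟩ := my_harmonic_const S hS P hP0 hP1 hirr v hv'
        refine Submodule.mem_span_singleton.2 ⟨c, ?_⟩
        ext i; simp [hc i]
      · rw [Submodule.span_singleton_le_iff_mem]
        apply LinearMap.mem_ker.2
        ext i
        rw [hTapp]
        simp [hP1 i]
    have hfinker : Module.finrank ℝ (LinearMap.ker T) = 1 := by
      rw [hker]
      exact finrank_span_singleton hone
    have hfintop : Module.finrank ℝ (Fin S → ℝ) = S := by
      simp [Module.finrank_fin_fun]
    have hrangeT : Module.finrank ℝ (LinearMap.range T) = S - 1 := by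
      have := LinearMap.finrank_range_add_finrank_ker T
      rw [hfinker, hfintop] at this
      omega
    have hφsurj : LinearMap.range φ = ⊤ := by
      rw [LinearMap.range_eq_top]
      intro r
      exact ⟨fun _ => r, by simp [φ, ← Finset.sum_mul, hπ1]⟩
    have hkerφ : Module.finrank ℝ (LinearMap.ker φ) = S - 1 := by
      have := LinearMap.finrank_range_add_finrank_ker φ
      rw [hφsurj, hfintop] at this
      simp at this
      omega
    have hle : LinearMap.range T ≤ LinearMap.ker φ := by
      rintro v ⟨g, rfl⟩
      apply LinearMap.mem_ker.2
      show ∑ i, π i * T g i = 0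
      have : ∀ i, π i * T g i = π i * g i - π i * ∑ j, P i j * g j := by
        intro i; rw [hTapp]; ring
      rw [Finset.sum_congr rfl fun i _ => this i, Finset.sum_sub_distrib]
      have : ∑ i, π i * ∑ j, P i j * g j = ∑ j, π j * g j := by
        calc ∑ i, π i * ∑ j, P i j * g j = ∑ i, ∑ j, π i * P i j * g j := by
              simp [Finset.mul_sum]; congr 1; ext i; congr 1; ext j; ring
          _ = ∑ j, (∑ i, π i * P i j) * g j := by
              rw [Finset.sum_comm]
              exact Finset.sum_congr rfl fun j _ => by rw [Finset.sum_mul]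
          _ = ∑ j, π j * g j := by simp [hπstat]
      rw [this]; ring
    have heq : LinearMap.range T = LinearMap.ker φ :=
      Submodule.eq_of_le_of_finrank_eq hle (by rw [hrangeT, hkerφ])
    have hmem : (fun i => f i - J) ∈ LinearMap.ker φ := by
      apply LinearMap.mem_ker.2
      show ∑ i, π i * (f i - J) = 0
      simp [mul_sub, Finset.sum_sub_distrib, ← hJ, ← Finset.sum_mul, hπ1]
    rw [← heq] at hmem
    obtain ⟨g, hg⟩ := hmem
    refine ⟨g, fun i => ?_⟩
    have := congrFun hg i
    rw [hTapp] at this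
    linarith
  · -- uniqueness
    intro g g' hg hg'
    have hdiff : ∀ i, (g' i - g i) = ∑ j, P i j * (g' j - g j) := by
      intro i
      have h1 := hg i
      have h2 := hg' i
      have : ∑ j, P i j * (g' j - g j) = (∑ j, P i j * g' j) - ∑ j, P i j * g j := by
        simp [mul_sub, Finset.sum_sub_distrib]
      rw [this]
      linarith
    obtain ⟨c, hc⟩ := my_harmonic_const S hS P hP0 hP1 hirr (fun i => g' i - g i) hdiff
    exact ⟨c, fun i => by have := hc i; linarith⟩
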